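/- Let n and d be positive integers with d ≥ 16 and (d^{7/8} − d^{5/8})/2 ≥ 8·d^{3/4} + 4·√d (which holds for all sufficiently large d), and let G be an (n,d)-Ramanujan graph. Let γ be an integer with γ ≥ 2 + log₂ n. Then every (γ, δ(d))-dense-neighborhood S for a vertex v of G contains at least 4n·d^{-1/4} vertices, where δ(d) = (d^{7/8} − d^{5/8})/2. -/

import Mathlib

open Finset

/-- A simple graph `G` on a finite vertex set of cardinality `n` is `(n,d)`-Ramanujan
if it is `d`-regular and every real vector `x` on the vertices whose coordinates sum
to `0` satisfies `‖Ax‖₂ ≤ 2√(d−1)·‖x‖₂`, where `A` is the adjacency matrix of `G`. -/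
def IsRamanujan {V : Type*} [Fintype V] [DecidableEq V] (n d : ℕ)
    (G : SimpleGraph V) [DecidableRel G.Adj] : Prop :=
  Fintype.card V = n ∧ G.IsRegularOfDegree d ∧
    ∀ x : V → ℝ, (∑ v, x v) = 0 →
      Real.sqrt (∑ v, ((G.adjMatrix ℝ).mulVec x v) ^ 2) ≤
        2 * Real.sqrt ((d : ℝ) - 1) * Real.sqrt (∑ v, (x v) ^ 2)

/-- `δ(d) = (d^{7/8} − d^{5/8})/2`. -/
noncomputable def deltaOf (d : ℕ) : ℝ :=
  ((d : ℝ) ^ (7 / 8 : ℝ) - (d : ℝ) ^ (5 / 8 : ℝ)) / 2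

/-- `N^i(v)`: the set of vertices at graph distance at most `i` from `v`. -/
def genNbhd {V : Type*} (G : SimpleGraph V) (v : V) (i : ℕ) : Set V :=
  {u | ∃ w : G.Walk v u, w.length ≤ i}

/-- A finite set `S` of vertices is a `(γ,δ)`-dense-neighborhood for `v` if `v ∈ S`,
`S ⊆ N^γ(v)`, and every vertex of `S ∩ N^{γ−1}(v)` has at least `δ` neighbors in `S`. -/
def IsDenseNbhd {V : Type*} [Fintype V] [DecidableEq V]
    (G : SimpleGraph V) [DecidableRel G.Adj] (v : V) (γ : ℕ) (δ : ℝ)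
    (S : Finset V) : Prop :=
  v ∈ S ∧ (S : Set V) ⊆ genNbhd G v γ ∧
    ∀ u ∈ S, u ∈ genNbhd G v (γ - 1) → δ ≤ ((G.neighborFinset u ∩ S).card : ℝ)

lemma indsum {V : Type*} [Fintype V] [DecidableEq V] (B : Finset V) :
    (∑ w : V, (if w ∈ B then (1:ℝ) else 0)) = B.card := by
  rw [Finset.sum_boole]; congr 1; simp [Finset.filter_mem_eq_inter]

lemma mixing {V : Type*} [Fintype V] [DecidableEq V] {n d : ℕ} (hn : 0 < n)
    {G : SimpleGraph V} [DecidableRel G.Adj] (hG : IsRamanujan n d G)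
    (A B : Finset V) :
    ∑ u ∈ A, ((G.neighborFinset u ∩ B).card : ℝ) ≤
      d * A.card * B.card / n +
        2 * Real.sqrt ((d:ℝ) - 1) * (Real.sqrt A.card * Real.sqrt B.card) := by
  obtain ⟨hcard, hreg, hspec⟩ := hG
  have hN : (0:ℝ) < n := by exact_mod_cast hn
  set c : ℝ := (B.card : ℝ) / n with hc
  set x : V → ℝ := fun w => (if w ∈ B then (1:ℝ) else 0) - c with hxdef
  have hsum : (∑ w, x w) = 0 := by
    simp only [hxdef, Finset.sum_sub_distrib, indsum, Finset.sum_const,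
      Finset.card_univ, hcard, nsmul_eq_mul, hc]
    field_simp
    ring
  have hAx : ∀ u, (G.adjMatrix ℝ).mulVec x u
      = ((G.neighborFinset u ∩ B).card : ℝ) - d * c := by
    intro u
    rw [SimpleGraph.adjMatrix_mulVec_apply]
    rw [Finset.sum_sub_distrib, Finset.sum_boole, Finset.filter_mem_eq_inter,
      Finset.sum_const, nsmul_eq_mul]
    rw [show (G.neighborFinset u).card = d from hreg u]
  have hx2 : (∑ w, (x w)^2) ≤ B.card := by
    have h1 : ∀ w, (x w)^2 = (if w ∈ B then (1:ℝ) else 0) - 2*c*(if w ∈ B then (1:ℝ) else 0) + c^2 := by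
      intro w; by_cases h : w ∈ B <;> simp [hxdef, h] <;> ring
    rw [Finset.sum_congr rfl (fun w _ => h1 w)]
    rw [Finset.sum_add_distrib, Finset.sum_sub_distrib, indsum, ← Finset.mul_sum, indsum,
      Finset.sum_const, Finset.card_univ, hcard, nsmul_eq_mul]
    have he : (B.card:ℝ) - 2*c*B.card + n*c^2 = B.card - B.card^2/n := by
      rw [hc]; field_simp; ring
    rw [he]
    have : (0:ℝ) ≤ (B.card:ℝ)^2/n := by positivity
    linarith
  set f := (G.adjMatrix ℝ).mulVec x with hf
  have hCS : ∑ u ∈ A, f u ≤ Real.sqrt A.card * Real.sqrt (∑ u, (f u)^2) := by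
    have h1 : ∑ u ∈ A, f u = ∑ u : V, (if u ∈ A then (1:ℝ) else 0) * f u := by
      simp only [ite_mul, one_mul, zero_mul, Finset.sum_ite_mem, Finset.univ_inter]
    have h2 := Finset.sum_mul_sq_le_sq_mul_sq Finset.univ (fun u => if u ∈ A then (1:ℝ) else 0) f
    have h3 : (∑ u : V, (if u ∈ A then (1:ℝ) else 0)^2) = A.card := by
      rw [← indsum A]
      exact Finset.sum_congr rfl (fun u _ => by split <;> norm_num)
    rw [h3] at h2
    rw [h1]
    calc ∑ u : V, (if u ∈ A then (1:ℝ) else 0) * f u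
        ≤ |∑ u : V, (if u ∈ A then (1:ℝ) else 0) * f u| := le_abs_self _
      _ = Real.sqrt ((∑ u : V, (if u ∈ A then (1:ℝ) else 0) * f u)^2) := (Real.sqrt_sq_eq_abs _).symm
      _ ≤ Real.sqrt ((A.card : ℝ) * ∑ u, (f u)^2) := Real.sqrt_le_sqrt h2
      _ = Real.sqrt A.card * Real.sqrt (∑ u, (f u)^2) := Real.sqrt_mul (by positivity) _
  have hspec' := hspec x hsum
  have hx2' : Real.sqrt (∑ w, (x w)^2) ≤ Real.sqrt B.card := Real.sqrt_le_sqrt hx2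
  have hAxsum : ∑ u ∈ A, f u = (∑ u ∈ A, ((G.neighborFinset u ∩ B).card : ℝ)) - A.card * (d * c) := by
    rw [Finset.sum_congr rfl (fun u _ => hAx u), Finset.sum_sub_distrib, Finset.sum_const, nsmul_eq_mul]
  have hfinal : Real.sqrt (∑ u, (f u)^2) ≤ 2 * Real.sqrt ((d:ℝ) - 1) * Real.sqrt B.card := by
    refine hspec'.trans ?_
    have h0 : (0:ℝ) ≤ 2 * Real.sqrt ((d:ℝ) - 1) := by positivity
    exact mul_le_mul_of_nonneg_left hx2' h0
  have h4 : ∑ u ∈ A, f u ≤ Real.sqrt A.card * (2 * Real.sqrt ((d:ℝ) - 1) * Real.sqrt B.card) := by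
    refine hCS.trans ?_
    exact mul_le_mul_of_nonneg_left hfinal (Real.sqrt_nonneg _)
  rw [hAxsum] at h4
  have hcc : (A.card:ℝ) * (d * c) = d * A.card * B.card / n := by rw [hc]; ring
  nlinarith [Real.sqrt_nonneg ((d:ℝ)-1), Real.sqrt_nonneg (A.card:ℝ), Real.sqrt_nonneg (B.card:ℝ)]

lemma genNbhd_self {V : Type*} (G : SimpleGraph V) (v : V) (i : ℕ) : v ∈ genNbhd G v i :=
  ⟨SimpleGraph.Walk.nil, by simp⟩

lemma genNbhd_mono {V : Type*} (G : SimpleGraph V) (v : V) {i j : ℕ} (h : i ≤ j) :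
    genNbhd G v i ⊆ genNbhd G v j := fun _ ⟨w, hw⟩ => ⟨w, hw.trans h⟩

lemma genNbhd_step {V : Type*} {G : SimpleGraph V} {v u w : V} {i : ℕ}
    (hu : u ∈ genNbhd G v i) (h : G.Adj u w) : w ∈ genNbhd G v (i+1) := by
  obtain ⟨p, hp⟩ := hu
  exact ⟨p.concat h, by rw [SimpleGraph.Walk.length_concat]; omega⟩

set_option maxHeartbeats 1000000 in
/-- in an `(n,d)`-Ramanujan graph with `d ≥ 16` and
`δ(d) ≥ 8·d^{3/4} + 4·√d`, every `(γ, δ(d))`-dense-neighborhood for a vertex `v`,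
where `γ ≥ 2 + log₂ n`, contains at least `4n·d^{-1/4}` vertices. -/
theorem ramanujan_dense_nbhd_large {V : Type*} [Fintype V] [DecidableEq V]
    (n d : ℕ) (hn : 0 < n) (hd : 16 ≤ d)
    (hd' : 8 * (d : ℝ) ^ (3 / 4 : ℝ) + 4 * Real.sqrt d ≤ deltaOf d)
    (G : SimpleGraph V) [DecidableRel G.Adj] (hG : IsRamanujan n d G)
    (γ : ℕ) (hγ : 2 + Real.logb 2 n ≤ (γ : ℝ))
    (v : V) (S : Finset V) (hS : IsDenseNbhd G v γ (deltaOf d) S) :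
    4 * (n : ℝ) * (d : ℝ) ^ (-(1 / 4 : ℝ)) ≤ S.card := by
  classical
  by_contra hcon
  push_neg at hcon
  obtain ⟨hvS, hSsub, hdense⟩ := hS
  have hdpos : (0:ℝ) < d := by positivity
  have hnpos : (0:ℝ) < n := by exact_mod_cast hn
  set T : ℕ → Finset V := fun i => S.filter (fun u => u ∈ genNbhd G v i) with hT
  have hTS : ∀ i, T i ⊆ S := fun i => Finset.filter_subset _ _
  -- growth
  have grow : ∀ i, i ≤ γ → (4:ℝ)^i ≤ ((T i).card : ℝ) := by
    intro i
    induction i with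
    | zero =>
      intro _
      have hv : v ∈ T 0 := Finset.mem_filter.mpr ⟨hvS, genNbhd_self G v 0⟩
      have : 1 ≤ (T 0).card := Finset.card_pos.mpr ⟨v, hv⟩
      simpa using (by exact_mod_cast this : (1:ℝ) ≤ ((T 0).card : ℝ))
    | succ i ih =>
      intro hle
      have ih' : (4:ℝ)^i ≤ ((T i).card : ℝ) := ih (by omega)
      set a : ℝ := ((T i).card : ℝ) with haa
      set b : ℝ := ((T (i+1)).card : ℝ) with hbb
      have ha1 : (1:ℝ) ≤ a := le_trans (one_le_pow₀ (by norm_num)) ih'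
      have hapos : (0:ℝ) < a := by linarith
      -- each vertex of T i has ≥ δ neighbors in T (i+1)
      have hδ : ∀ u ∈ T i, deltaOf d ≤ ((G.neighborFinset u ∩ T (i+1)).card : ℝ) := by
        intro u hu
        obtain ⟨huS, hunb⟩ := Finset.mem_filter.mp hu
        have hu' : u ∈ genNbhd G v (γ - 1) := genNbhd_mono G v (by omega) hunb
        have h1 := hdense u huS hu'
        have hsub : G.neighborFinset u ∩ S ⊆ G.neighborFinset u ∩ T (i+1) := by
          intro w hw
          obtain ⟨hw1, hw2⟩ := Finset.mem_inter.mp hw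
          refine Finset.mem_inter.mpr ⟨hw1, Finset.mem_filter.mpr ⟨hw2, ?_⟩⟩
          exact genNbhd_step hunb ((SimpleGraph.mem_neighborFinset _ _ _).mp hw1)
        have h2 := Finset.card_le_card hsub
        exact h1.trans (Nat.cast_le.mpr h2)
      have hsum : deltaOf d * a ≤ ∑ u ∈ T i, ((G.neighborFinset u ∩ T (i+1)).card : ℝ) := by
        calc deltaOf d * a = ∑ _u ∈ T i, deltaOf d := by
              rw [Finset.sum_const, nsmul_eq_mul]; ring
          _ ≤ _ := Finset.sum_le_sum hδ
      have hmix := mixing hn hG (T i) (T (i+1))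
      have key : deltaOf d * a ≤ d * a * b / n +
          2 * Real.sqrt ((d:ℝ) - 1) * (Real.sqrt a * Real.sqrt b) := hsum.trans hmix
      -- bound d*a*b/n
      have hbS : b ≤ (S.card : ℝ) := by
        show ((T (i+1)).card : ℝ) ≤ (S.card : ℝ)
        exact Nat.cast_le.mpr (Finset.card_le_card (hTS (i+1)))
      have hblt : b < 4 * n * (d:ℝ) ^ (-(1/4 : ℝ)) := lt_of_le_of_lt hbS hcon
      have hd34 : (d:ℝ) * ((d:ℝ) ^ (-(1/4 : ℝ))) = (d:ℝ) ^ (3/4 : ℝ) := by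
        calc (d:ℝ) * ((d:ℝ) ^ (-(1/4 : ℝ)))
            = (d:ℝ)^(1:ℝ) * (d:ℝ) ^ (-(1/4 : ℝ)) := by rw [Real.rpow_one]
          _ = (d:ℝ)^((1:ℝ) + -(1/4 : ℝ)) := (Real.rpow_add hdpos _ _).symm
          _ = (d:ℝ) ^ (3/4 : ℝ) := by norm_num
      have hterm1 : d * a * b / n ≤ 4 * (d:ℝ)^(3/4:ℝ) * a := by
        have h1 : d * a * b / n = a * ((d:ℝ) * b / n) := by ring
        have h2 : (d:ℝ) * b / n ≤ 4 * (d:ℝ)^(3/4:ℝ) := by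
          rw [div_le_iff₀ hnpos]
          calc (d:ℝ) * b ≤ (d:ℝ) * (4 * n * (d:ℝ) ^ (-(1/4 : ℝ))) :=
                mul_le_mul_of_nonneg_left hblt.le hdpos.le
            _ = 4 * ((d:ℝ) * (d:ℝ) ^ (-(1/4 : ℝ))) * n := by ring
            _ = 4 * (d:ℝ)^(3/4:ℝ) * n := by rw [hd34]
        calc d * a * b / n = a * ((d:ℝ) * b / n) := h1
          _ ≤ a * (4 * (d:ℝ)^(3/4:ℝ)) := mul_le_mul_of_nonneg_left h2 hapos.le
          _ = 4 * (d:ℝ)^(3/4:ℝ) * a := by ring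
      have hsd : Real.sqrt ((d:ℝ) - 1) ≤ Real.sqrt d := Real.sqrt_le_sqrt (by linarith)
      have hsdpos : (0:ℝ) < Real.sqrt d := Real.sqrt_pos.mpr hdpos
      have hsab : (0:ℝ) ≤ Real.sqrt a * Real.sqrt b := by positivity
      have key2 : (8 * (d:ℝ)^(3/4:ℝ) + 4 * Real.sqrt d) * a ≤
          4 * (d:ℝ)^(3/4:ℝ) * a + 2 * Real.sqrt d * (Real.sqrt a * Real.sqrt b) := by
        have := mul_le_mul_of_nonneg_right hd' hapos.le
        have h2 : 2 * Real.sqrt ((d:ℝ) - 1) * (Real.sqrt a * Real.sqrt b) ≤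
            2 * Real.sqrt d * (Real.sqrt a * Real.sqrt b) := by
          apply mul_le_mul_of_nonneg_right _ hsab
          linarith
        linarith
      have hd34nn : (0:ℝ) ≤ (d:ℝ)^(3/4:ℝ) := Real.rpow_nonneg hdpos.le _
      have key3 : 4 * Real.sqrt d * a ≤ 2 * Real.sqrt d * (Real.sqrt a * Real.sqrt b) := by
        have h0 : (0:ℝ) ≤ 4 * (d:ℝ)^(3/4:ℝ) * a := by positivity
        linarith [key, hterm1, key2]
      have key4 : 2 * a ≤ Real.sqrt a * Real.sqrt b := by
        have e : (2 * Real.sqrt d) * (2 * a) = 4 * Real.sqrt d * a := by ring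
        have h2 : (2 * Real.sqrt d) * (2 * a) ≤
            (2 * Real.sqrt d) * (Real.sqrt a * Real.sqrt b) := by rw [e]; exact key3
        exact le_of_mul_le_mul_left h2 (by positivity)
      have hsa2 : Real.sqrt a ^ 2 = a := Real.sq_sqrt hapos.le
      have hsb2 : Real.sqrt b ^ 2 = b := Real.sq_sqrt (by positivity)
      have hsq : (2*a) * (2*a) ≤ (Real.sqrt a * Real.sqrt b) * (Real.sqrt a * Real.sqrt b) :=
        mul_self_le_mul_self (by positivity) key4
      have hab2 : (Real.sqrt a * Real.sqrt b) * (Real.sqrt a * Real.sqrt b) = a * b := by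
        have : (Real.sqrt a * Real.sqrt b) * (Real.sqrt a * Real.sqrt b)
            = Real.sqrt a ^ 2 * Real.sqrt b ^ 2 := by ring
        rw [this, hsa2, hsb2]
      have h4ab : 4 * a ≤ b := by
        rw [hab2] at hsq
        have h5 : 4 * a * a ≤ b * a := by nlinarith
        exact le_of_mul_le_mul_right h5 hapos
      calc (4:ℝ)^(i+1) = 4 * (4:ℝ)^i := by ring
        _ ≤ 4 * a := by linarith
        _ ≤ b := h4ab
  -- final contradiction
  have hfin := grow γ le_rfl
  have hTn : ((T γ).card : ℝ) ≤ n := by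
    have h1 : (T γ).card ≤ S.card := Finset.card_le_card (hTS γ)
    have h2 : S.card ≤ Fintype.card V := Finset.card_le_univ S
    have h3 : Fintype.card V = n := hG.1
    exact_mod_cast le_trans h1 (h2.trans_eq h3)
  have h2n : (2:ℝ) ^ (Real.logb 2 n) = n := Real.rpow_logb (by norm_num) (by norm_num) hnpos
  have h16 : (16:ℝ) * n^2 ≤ (4:ℝ)^γ := by
    have e1 : (4:ℝ)^γ = (4:ℝ)^((γ:ℕ):ℝ) := (Real.rpow_natCast 4 γ).symm
    have e2 : (4:ℝ)^((2:ℝ) + Real.logb 2 n) ≤ (4:ℝ)^((γ:ℕ):ℝ) :=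
      Real.rpow_le_rpow_of_exponent_le (by norm_num) hγ
    have e3 : (4:ℝ)^((2:ℝ) + Real.logb 2 n) = 16 * (n:ℝ)^2 := by
      rw [Real.rpow_add (by norm_num : (0:ℝ) < 4)]
      have e4 : (4:ℝ)^(2:ℝ) = 16 := by
        rw [show (2:ℝ) = ((2:ℕ):ℝ) by norm_num, Real.rpow_natCast]; norm_num
      have e5 : (4:ℝ)^(Real.logb 2 n) = (n:ℝ)^2 := by
        have h4' : (4:ℝ) = (2:ℝ)^(2:ℝ) := by
          rw [show (2:ℝ) = ((2:ℕ):ℝ) from by norm_num, Real.rpow_natCast]; norm_num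
        rw [h4', ← Real.rpow_mul (by norm_num : (0:ℝ) ≤ 2), mul_comm,
          Real.rpow_mul (by norm_num : (0:ℝ) ≤ 2), h2n,
          show (2:ℝ) = ((2:ℕ):ℝ) from by norm_num, Real.rpow_natCast]
      rw [e4, e5]
    rw [e1]; linarith [e2, e3.symm.le]
  have hn1 : (1:ℝ) ≤ n := Nat.one_le_cast.mpr hn
  nlinarith [hfin, hTn, h16, hn1]
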